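/- Let (a_n)_{n≥1} be a strictly increasing sequence of positive reals with a_n / log n → ∞ and a_{n+1} − a_n ≥ n^{−C} for some C > 0 for all large n. Fix k ≥ 2, A > 0, J = [A, A+1], η > 0, and 1 ≤ ℓ ≤ 2k. Then there is a constant c > 0 such that: for every u = (u₁,…,u_ℓ) ∈ (ℤ∖{0})^ℓ and every t = (t₁,…,t_ℓ) ∈ ℕ^ℓ with t₁ < ⋯ < t_ℓ, and every α ∈ J, writing φ(α) = ∑_{i=1}^ℓ uᵢ e^{α a_{tᵢ}}, one has max_{1 ≤ i ≤ ℓ} |φ^{(i)}(α)| ≥ c · t_ℓ^η. -/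

import Mathlib

open Filter Set Polynomial

noncomputable def dmin (a : ℕ → ℝ) (n : ℕ) : ℝ :=
  (Finset.range (n+1)).inf' Finset.nonempty_range_add_one (fun m => min 1 (a (m+1) - a m))

lemma dmin_pos {a : ℕ → ℝ} (ha : StrictMono a) (n : ℕ) : 0 < dmin a n :=
  (Finset.lt_inf'_iff _).2 fun m _ => lt_min one_pos (sub_pos.2 (ha (Nat.lt_succ_self m)))

lemma dmin_le {a : ℕ → ℝ} {m n : ℕ} (h : m ≤ n) : dmin a n ≤ min 1 (a (m+1) - a m) :=
  Finset.inf'_le _ (Finset.mem_range.2 (by omega))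

lemma dmin_le_one {a : ℕ → ℝ} (n : ℕ) : dmin a n ≤ 1 :=
  le_trans (dmin_le (Nat.zero_le n)) (min_le_left _ _)

lemma main_asym (a : ℕ → ℝ) (ha : StrictMono a) (hapos : ∀ n, 0 < a n)
    (hgrowth : Tendsto (fun n : ℕ => a n / Real.log n) atTop atTop)
    (hgap : ∃ C : ℝ, 0 < C ∧ ∀ᶠ n : ℕ in atTop, (n : ℝ) ^ (-C) ≤ a (n + 1) - a n)
    (A η : ℝ) (hA : 0 < A) (hη : 0 < η) (ℓ : ℕ) (hℓ1 : 1 ≤ ℓ) :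
    ∃ c : ℝ, 0 < c ∧ ∀ n : ℕ, 1 ≤ n →
      c * ((n:ℝ)^η * ((ℓ+1) * 2^ℓ * (max 1 (a n))^ℓ)) ≤
        a n * (dmin a n)^(ℓ-1) * Real.exp (A * a n) := by
  obtain ⟨C, hC, hgapev⟩ := hgap
  obtain ⟨n₀, hn₀⟩ := eventually_atTop.mp hgapev
  set n₁ := max n₀ 1 with hn₁def
  set d₀ : ℝ := min (dmin a n₁) 1 with hd₀def
  have hd₀pos : 0 < d₀ := lt_min (dmin_pos ha n₁) one_pos
  have hd₀le : d₀ ≤ 1 := min_le_right _ _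
  -- Step A
  have stepA : ∀ n : ℕ, n₁ ≤ n → d₀ * (n:ℝ)^(-C) ≤ dmin a n := by
    intro n hn
    have hn1 : (1:ℝ) ≤ (n:ℝ) := by
      have : 1 ≤ n := le_trans (le_max_right _ _) hn
      exact_mod_cast this
    have hnC1 : (n:ℝ)^(-C) ≤ 1 :=
      Real.rpow_le_one_of_one_le_of_nonpos hn1 (neg_nonpos.2 hC.le)
    have hnCpos : (0:ℝ) < (n:ℝ)^(-C) := Real.rpow_pos_of_pos (by linarith) _
    apply Finset.le_inf'
    intro m hm
    rw [Finset.mem_range] at hm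
    rcases le_or_gt m n₁ with hmle | hmgt
    · have h1 : dmin a n₁ ≤ min 1 (a (m+1) - a m) := dmin_le hmle
      have h2 : d₀ * (n:ℝ)^(-C) ≤ d₀ := mul_le_of_le_one_right hd₀pos.le hnC1
      calc d₀ * (n:ℝ)^(-C) ≤ d₀ := h2
        _ ≤ dmin a n₁ := min_le_left _ _
        _ ≤ _ := h1
    · have hm0 : n₀ ≤ m := le_trans (le_max_left _ _) hmgt.le
      have hmδ : (m:ℝ)^(-C) ≤ a (m+1) - a m := hn₀ m hm0
      have hm1 : (1:ℝ) ≤ (m:ℝ) := by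
        have : 1 ≤ m := le_trans (le_max_right _ _) hmgt.le
        exact_mod_cast this
      have hmn : (m:ℝ) ≤ (n:ℝ) := by exact_mod_cast (by omega : m ≤ n)
      have hnm : (n:ℝ)^(-C) ≤ (m:ℝ)^(-C) :=
        Real.rpow_le_rpow_of_nonpos (by linarith) hmn (neg_nonpos.2 hC.le)
      have hmC1 : (m:ℝ)^(-C) ≤ 1 :=
        Real.rpow_le_one_of_one_le_of_nonpos hm1 (neg_nonpos.2 hC.le)
      have : (n:ℝ)^(-C) ≤ min 1 (a (m+1) - a m) := le_min (by linarith) (by linarith)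
      calc d₀ * (n:ℝ)^(-C) ≤ 1 * (n:ℝ)^(-C) := by nlinarith
        _ = (n:ℝ)^(-C) := one_mul _
        _ ≤ _ := this
  -- constants
  set M₁ : ℝ := η + C*(ℓ-1) + 1 with hM₁def
  have hM₁pos : 0 < M₁ := by
    have : (0:ℝ) ≤ C*(ℓ-1) := by
      have : (0:ℝ) ≤ ((ℓ:ℝ) - 1) := by
        have : (1:ℝ) ≤ (ℓ:ℝ) := by exact_mod_cast hℓ1
        linarith
      positivity
    simp only [hM₁def]; linarith
  set K : ℝ := (ℓ+1) * 2^ℓ * (2*ℓ/A)^ℓ / d₀^(ℓ-1) with hKdef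
  have hKpos : 0 < K := by
    apply div_pos
    · have hℓpos : (0:ℝ) < ℓ := by exact_mod_cast hℓ1
      positivity
    · positivity
  -- eventual facts
  have hlog1 : ∀ᶠ n : ℕ in atTop, (1:ℝ) ≤ Real.log n := by
    filter_upwards [eventually_ge_atTop 3] with n hn
    have h3 : (3:ℝ) ≤ (n:ℝ) := by exact_mod_cast hn
    have := Real.exp_one_lt_d9
    rw [Real.le_log_iff_exp_le (by linarith)]
    linarith
  have hgrow2 : ∀ᶠ n : ℕ in atTop, max 1 ((2/A)*M₁) ≤ a n / Real.log n :=
    hgrowth.eventually_ge_atTop _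
  have hBig : ∀ᶠ n : ℕ in atTop,
      1 * ((n:ℝ)^η * ((ℓ+1) * 2^ℓ * (max 1 (a n))^ℓ)) ≤
        a n * (dmin a n)^(ℓ-1) * Real.exp (A * a n) := by
    filter_upwards [hlog1, hgrow2, eventually_ge_atTop n₁, eventually_ge_atTop 2,
      (tendsto_natCast_atTop_atTop (R := ℝ)).eventually_ge_atTop K] with n hl1 hg2 hn₁n h2n hKn
    have hlogpos : 0 < Real.log n := by linarith
    have h1an : 1 ≤ a n := by
      have := le_trans (le_max_left _ _) hg2
      rw [le_div_iff₀ hlogpos] at this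
      nlinarith
    have h2an : M₁ * Real.log n ≤ (A/2) * a n := by
      have h := le_trans (le_max_right _ _) hg2
      rw [le_div_iff₀ hlogpos] at h
      have h' := mul_le_mul_of_nonneg_left h (by positivity : (0:ℝ) ≤ A/2)
      have hh : A/2 * (2/A*M₁*Real.log n) = M₁ * Real.log n := by field_simp
      linarith [hh ▸ h']
    have hmax : max 1 (a n) = a n := max_eq_right h1an
    have hn1 : (1:ℝ) ≤ (n:ℝ) := by exact_mod_cast (by omega : 1 ≤ n)
    have hnpos : (0:ℝ) < (n:ℝ) := by linarith
    have hℓR : (0:ℝ) < (ℓ:ℝ) := by exact_mod_cast hℓ1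
    -- (a n)^ℓ ≤ (2ℓ/A)^ℓ * exp((A/2) a n)
    have hxpow : (a n)^ℓ ≤ (2*ℓ/A)^ℓ * Real.exp ((A/2) * a n) := by
      have hε : (0:ℝ) < A/(2*ℓ) := by positivity
      have hx1 : a n ≤ (2*ℓ/A) * Real.exp (A/(2*ℓ) * a n) := by
        have h := Real.add_one_le_exp (A/(2*ℓ) * a n)
        have h2 : A/(2*ℓ) * a n ≤ Real.exp (A/(2*ℓ) * a n) := by linarith
        have h3 := mul_le_mul_of_nonneg_left h2 (by positivity : (0:ℝ) ≤ 2*ℓ/A)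
        have h4 : 2*ℓ/A * (A/(2*ℓ) * a n) = a n := by field_simp
        linarith [h4 ▸ h3]
      calc (a n)^ℓ ≤ ((2*ℓ/A) * Real.exp (A/(2*ℓ) * a n))^ℓ := by
            apply pow_le_pow_left₀ (by linarith) hx1 ℓ
        _ = (2*ℓ/A)^ℓ * (Real.exp (A/(2*ℓ) * a n))^ℓ := mul_pow _ _ _
        _ = (2*ℓ/A)^ℓ * Real.exp ((A/2) * a n) := by
            rw [← Real.exp_nat_mul]
            congr 2
            field_simp
    -- assemble
    have hdmin : d₀ * (n:ℝ)^(-C) ≤ dmin a n := stepA n hn₁n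
    have hdminpos := dmin_pos ha n
    have hnCpos : (0:ℝ) < (n:ℝ)^(-C) := Real.rpow_pos_of_pos hnpos _
    have hdpow : (d₀ * (n:ℝ)^(-C))^(ℓ-1) ≤ (dmin a n)^(ℓ-1) :=
      pow_le_pow_left₀ (by positivity) hdmin _
    set E := Real.exp ((A/2) * a n) with hEdef
    have hEpos : 0 < E := Real.exp_pos _
    set X := (n:ℝ)^η with hXdef
    have hXpos : 0 < X := Real.rpow_pos_of_pos hnpos _
    set q := (n:ℝ)^(C*((ℓ:ℝ)-1)) with hqdef
    set p := (n:ℝ)^(-(C*((ℓ:ℝ)-1))) with hpdef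
    have hppos : 0 < p := Real.rpow_pos_of_pos hnpos _
    have hpq : p * q = 1 := by
      rw [hpdef, hqdef, ← Real.rpow_add hnpos]
      simp
    have hXq : X * q = (n:ℝ)^(η + C*((ℓ:ℝ)-1)) := (Real.rpow_add hnpos _ _).symm
    have hE2 : E * E = Real.exp (A * a n) := by
      rw [hEdef, ← Real.exp_add]; ring_nf
    have hppow : ((n:ℝ)^(-C))^(ℓ-1:ℕ) = p := by
      rw [← Real.rpow_natCast ((n:ℝ)^(-C)) (ℓ-1), ← Real.rpow_mul hnpos.le,
        Nat.cast_sub hℓ1, Nat.cast_one, hpdef]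
      congr 1
      ring
    have hKd : d₀^(ℓ-1) * K = (ℓ+1) * 2^ℓ * (2*ℓ/A)^ℓ := by
      rw [hKdef]
      field_simp
    have hnM : K * (n:ℝ)^(η + C*((ℓ:ℝ)-1)) ≤ E := by
      have e1 : (n:ℝ)^M₁ = Real.exp (Real.log n * M₁) := Real.rpow_def_of_pos hnpos _
      have e2 : Real.exp (Real.log n * M₁) ≤ E :=
        Real.exp_le_exp.2 (by rw [mul_comm]; exact h2an)
      have e3 : (n:ℝ)^M₁ = (n:ℝ)^(η + C*((ℓ:ℝ)-1)) * (n:ℝ) := by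
        rw [hM₁def, Real.rpow_add hnpos, Real.rpow_one]
      have e4 : K * (n:ℝ)^(η + C*((ℓ:ℝ)-1)) ≤ (n:ℝ) * (n:ℝ)^(η + C*((ℓ:ℝ)-1)) :=
        mul_le_mul_of_nonneg_right hKn (Real.rpow_nonneg hnpos.le _)
      calc K * (n:ℝ)^(η + C*((ℓ:ℝ)-1)) ≤ (n:ℝ) * (n:ℝ)^(η + C*((ℓ:ℝ)-1)) := e4
        _ = (n:ℝ)^M₁ := by rw [e3]; ring
        _ = Real.exp (Real.log n * M₁) := e1
        _ ≤ E := e2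
    calc 1 * (X * ((ℓ+1) * 2^ℓ * (max 1 (a n))^ℓ))
        = X * ((ℓ+1) * 2^ℓ * (a n)^ℓ) := by rw [hmax, one_mul]
      _ ≤ X * ((ℓ+1) * 2^ℓ * ((2*ℓ/A)^ℓ * E)) := by
          apply mul_le_mul_of_nonneg_left ?_ hXpos.le
          apply mul_le_mul_of_nonneg_left hxpow
          positivity
      _ = (d₀^(ℓ-1) * p) * ((K * (X * q)) * E) := by
          have expand : (d₀^(ℓ-1) * p) * ((K * (X * q)) * E) =
              (d₀^(ℓ-1) * K) * (p * q) * (X * E) := by ring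
          rw [expand, hKd, hpq]; ring
      _ ≤ (d₀^(ℓ-1) * p) * (E * E) := by
          apply mul_le_mul_of_nonneg_left ?_ (by positivity)
          apply mul_le_mul_of_nonneg_right ?_ hEpos.le
          rw [hXq]; exact hnM
      _ = (d₀ * (n:ℝ)^(-C))^(ℓ-1) * Real.exp (A * a n) := by
          rw [mul_pow, hppow, hE2]
      _ ≤ (dmin a n)^(ℓ-1) * Real.exp (A * a n) :=
          mul_le_mul_of_nonneg_right hdpow (Real.exp_pos _).le
      _ ≤ a n * ((dmin a n)^(ℓ-1) * Real.exp (A * a n)) :=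
          le_mul_of_one_le_left (by positivity) h1an
      _ = a n * (dmin a n)^(ℓ-1) * Real.exp (A * a n) := (mul_assoc _ _ _).symm
  -- final assembly
  obtain ⟨N, hN⟩ := eventually_atTop.mp hBig
  set N' := max N 1 with hN'def
  have hne : (Finset.Icc 1 N').Nonempty := ⟨1, Finset.mem_Icc.2 ⟨le_refl _, le_max_right _ _⟩⟩
  set G : ℕ → ℝ := fun n => (a n * (dmin a n)^(ℓ-1) * Real.exp (A * a n)) /
    ((n:ℝ)^η * ((ℓ+1) * 2^ℓ * (max 1 (a n))^ℓ)) with hGdef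
  have hDpos : ∀ n : ℕ, 1 ≤ n → 0 < (n:ℝ)^η * (((ℓ:ℝ)+1) * 2^ℓ * (max 1 (a n))^ℓ) := by
    intro n hn
    have hnpos : (0:ℝ) < (n:ℝ) := by exact_mod_cast hn
    have h1 : (0:ℝ) < max 1 (a n) := lt_of_lt_of_le one_pos (le_max_left _ _)
    have hℓR : (0:ℝ) < (ℓ:ℝ) := by exact_mod_cast hℓ1
    have := Real.rpow_pos_of_pos hnpos η
    positivity
  have hRHSpos : ∀ n : ℕ, 0 < a n * (dmin a n)^(ℓ-1) * Real.exp (A * a n) := by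
    intro n
    exact mul_pos (mul_pos (hapos n) (pow_pos (dmin_pos ha n) _)) (Real.exp_pos _)
  set c := min 1 ((Finset.Icc 1 N').inf' hne G) with hcdef
  have hcpos : 0 < c := by
    apply lt_min one_pos
    rw [Finset.lt_inf'_iff]
    intro n hn
    rw [Finset.mem_Icc] at hn
    exact div_pos (hRHSpos n) (hDpos n hn.1)
  have hc1 : c ≤ 1 := min_le_left _ _
  refine ⟨c, hcpos, ?_⟩
  intro n hn
  rcases le_or_gt N n with hNn | hNn
  · calc c * ((n:ℝ)^η * ((ℓ+1) * 2^ℓ * (max 1 (a n))^ℓ))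
        ≤ 1 * ((n:ℝ)^η * ((ℓ+1) * 2^ℓ * (max 1 (a n))^ℓ)) :=
          mul_le_mul_of_nonneg_right hc1 (hDpos n hn).le
      _ ≤ _ := hN n hNn
  · have hmem : n ∈ Finset.Icc 1 N' := Finset.mem_Icc.2 ⟨hn, le_max_of_le_left hNn.le⟩
    have hle : c ≤ G n := le_trans (min_le_right _ _) (Finset.inf'_le _ hmem)
    rw [hGdef] at hle
    simp only at hle
    rw [le_div_iff₀ (hDpos n hn)] at hle
    exact hle

lemma coeff_prod_bound {γ : Type*} [DecidableEq γ] (s : Finset γ) (r : γ → ℝ) (R : ℝ) (hR : 1 ≤ R)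
    (hr : ∀ j ∈ s, |r j| ≤ R) :
    ∀ m, |(∏ j ∈ s, (X - C (r j))).coeff m| ≤ 2 ^ s.card * R ^ s.card := by
  induction s using Finset.induction with
  | empty =>
    intro m
    simp only [Finset.prod_empty, Polynomial.coeff_one, Finset.card_empty, pow_zero, mul_one]
    split <;> simp [abs_of_nonneg]
  | insert _ _ hnotmem ih =>
    rename_i c s'
    intro m
    rw [Finset.prod_insert hnotmem, Finset.card_insert_of_notMem hnotmem]
    have hr' : ∀ j ∈ s', |r j| ≤ R := fun j hj => hr j (Finset.mem_insert_of_mem hj)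
    have ih' := ih hr'
    have hQnn : (0:ℝ) ≤ 2 ^ s'.card * R ^ s'.card := by positivity
    have key : ((X - C (r c)) * ∏ j ∈ s', (X - C (r j))).coeff m =
        (X * ∏ j ∈ s', (X - C (r j))).coeff m - r c * (∏ j ∈ s', (X - C (r j))).coeff m := by
      rw [sub_mul, Polynomial.coeff_sub, Polynomial.coeff_C_mul]
    rw [key]
    have hrc : |r c| ≤ R := hr c (Finset.mem_insert_self _ _)
    have hX : |(X * ∏ j ∈ s', (X - C (r j))).coeff m| ≤ 2 ^ s'.card * R ^ s'.card := by
      cases m with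
      | zero => simp [Polynomial.mul_coeff_zero, hQnn]
      | succ m => rw [Polynomial.coeff_X_mul]; exact ih' m
    calc |(X * ∏ j ∈ s', (X - C (r j))).coeff m - r c * (∏ j ∈ s', (X - C (r j))).coeff m|
        ≤ |(X * ∏ j ∈ s', (X - C (r j))).coeff m| + |r c * (∏ j ∈ s', (X - C (r j))).coeff m| :=
          abs_sub _ _
      _ ≤ 2 ^ s'.card * R ^ s'.card + R * (2 ^ s'.card * R ^ s'.card) := by
          refine add_le_add hX ?_
          rw [abs_mul]
          exact mul_le_mul hrc (ih' m) (abs_nonneg _) (le_trans (by norm_num) hR)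
      _ ≤ 2 ^ (s'.card + 1) * R ^ (s'.card + 1) := by
          have h1 : (2:ℝ) ^ s'.card * R ^ s'.card ≤ 2 ^ s'.card * R ^ (s'.card + 1) := by
            have : (R:ℝ) ^ s'.card ≤ R ^ (s'.card+1) :=
              pow_le_pow_right₀ hR (Nat.le_succ _)
            nlinarith [pow_pos (by norm_num : (0:ℝ) < 2) s'.card]
          have h2 : R * (2 ^ s'.card * R ^ s'.card) = 2 ^ s'.card * R ^ (s'.card + 1) := by ring
          rw [h2]; rw [pow_succ 2]; nlinarith [pow_pos (by norm_num : (0:ℝ) < 2) s'.card, pow_pos (lt_of_lt_of_le one_pos hR) (s'.card+1)]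

lemma iterDeriv_sum_exp {m : ℕ} (u b : Fin m → ℝ) (i : ℕ) :
    iteratedDeriv i (fun β => ∑ j, u j * Real.exp (β * b j)) =
      fun α => ∑ j, u j * b j ^ i * Real.exp (α * b j) := by
  induction i with
  | zero => simp [iteratedDeriv_zero]
  | succ i ih =>
    rw [iteratedDeriv_succ, ih]
    funext α
    have h : HasDerivAt (fun α : ℝ => ∑ j, u j * b j ^ i * Real.exp (α * b j))
        (∑ j, u j * b j ^ i * (Real.exp (α * b j) * (1 * b j))) α := by
      apply HasDerivAt.fun_sum
      intro j _
      exact ((Real.hasDerivAt_exp (α * b j)).comp α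
        ((hasDerivAt_id α).mul_const (b j))).const_mul _
    rw [h.deriv]
    exact Finset.sum_congr rfl fun j _ => by ring
theorem stmt8 (a : ℕ → ℝ) (ha : StrictMono a) (hapos : ∀ n, 0 < a n)
    (hgrowth : Tendsto (fun n : ℕ => a n / Real.log n) atTop atTop)
    (hgap : ∃ C : ℝ, 0 < C ∧ ∀ᶠ n : ℕ in atTop, (n : ℝ) ^ (-C) ≤ a (n + 1) - a n)
    (k : ℕ) (hk : 2 ≤ k) (A : ℝ) (hA : 0 < A) (η : ℝ) (hη : 0 < η)
    (ℓ : ℕ) (hℓ1 : 1 ≤ ℓ) (hℓ2 : ℓ ≤ 2 * k) :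
    ∃ c : ℝ, 0 < c ∧ ∀ u : Fin ℓ → ℤ, (∀ i, u i ≠ 0) →
      ∀ t : Fin ℓ → ℕ, StrictMono t → ∀ α ∈ Icc A (A + 1),
        ∃ i : ℕ, 1 ≤ i ∧ i ≤ ℓ ∧
          c * (t ⟨ℓ - 1, by omega⟩ : ℝ) ^ η ≤
            |iteratedDeriv i (fun β => ∑ j, (u j : ℝ) * Real.exp (β * a (t j))) α| := by
  obtain ⟨c, hcpos, hc⟩ := main_asym a ha hapos hgrowth hgap A η hA hη ℓ hℓ1
  refine ⟨c, hcpos, ?_⟩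
  intro u hu t ht α hα
  set L : Fin ℓ := ⟨ℓ - 1, by omega⟩ with hLdef
  set n := t L with hndef
  -- iterated derivative formula
  have hID : ∀ i : ℕ, iteratedDeriv i (fun β => ∑ j, (u j : ℝ) * Real.exp (β * a (t j))) α
      = ∑ j, (u j : ℝ) * (a (t j)) ^ i * Real.exp (α * a (t j)) :=
    fun i => congrFun (iterDeriv_sum_exp (fun j => (u j : ℝ)) (fun j => a (t j)) i) α
  set φ : ℕ → ℝ := fun i => ∑ j, (u j : ℝ) * (a (t j)) ^ i * Real.exp (α * a (t j)) with hφdef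
  -- trivial case n = 0
  rcases Nat.eq_zero_or_pos n with hn0 | hnpos
  · refine ⟨1, le_refl 1, hℓ1, ?_⟩
    rw [hn0]
    simp only [Nat.cast_zero]
    rw [Real.zero_rpow hη.ne', mul_zero]
    exact abs_nonneg _
  -- main case
  have hLval : (L : ℕ) = ℓ - 1 := rfl
  have hjL : ∀ j : Fin ℓ, j ≠ L → t j < n := by
    intro j hj
    apply ht
    have hjv : (j : ℕ) ≠ ℓ - 1 := by
      intro h
      exact hj (Fin.ext (by rw [h, hLval]))
    have hjlt := j.isLt
    rw [Fin.lt_def, hLval]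
    omega
  classical
  set s : Finset (Fin ℓ) := Finset.univ.erase L with hsdef
  set Q : Polynomial ℝ := ∏ j ∈ s, (Polynomial.X - Polynomial.C (a (t j))) with hQdef
  set P : Polynomial ℝ := Polynomial.X * Q with hPdef
  have hcard : s.card = ℓ - 1 := by
    rw [hsdef, Finset.card_erase_of_mem (Finset.mem_univ _), Finset.card_univ, Fintype.card_fin]
  have hdegQ : Q.natDegree ≤ ℓ - 1 := by
    refine le_trans (Polynomial.natDegree_prod_le _ _) ?_
    have heq : ∀ j ∈ s, (Polynomial.X - Polynomial.C (a (t j))).natDegree = 1 :=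
      fun j _ => Polynomial.natDegree_X_sub_C _
    rw [Finset.sum_congr rfl heq, Finset.sum_const, smul_eq_mul, mul_one, hcard]
  have hdegP : P.natDegree < ℓ + 1 := by
    have h1 := Polynomial.natDegree_mul_le (p := (Polynomial.X : Polynomial ℝ)) (q := Q)
    have h2 : (Polynomial.X : Polynomial ℝ).natDegree = 1 := Polynomial.natDegree_X
    rw [hPdef]
    omega
  have hcoeff0 : P.coeff 0 = 0 := by
    rw [hPdef, Polynomial.mul_coeff_zero, Polynomial.coeff_X_zero, zero_mul]
  have hevalP : ∀ x : ℝ, P.eval x = x * ∏ j ∈ s, (x - a (t j)) := by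
    intro x
    rw [hPdef, Polynomial.eval_mul, Polynomial.eval_X, hQdef, Polynomial.eval_prod]
    simp
  have hroot : ∀ j ∈ s, P.eval (a (t j)) = 0 := by
    intro j hj
    rw [hevalP]
    rw [Finset.prod_eq_zero hj (by ring)]
    ring
  -- key identity
  have key : ∑ i ∈ Finset.range (ℓ+1), P.coeff i * φ i
      = (u L : ℝ) * Real.exp (α * a n) * P.eval (a n) := by
    have swap : ∑ i ∈ Finset.range (ℓ+1), P.coeff i * φ i
        = ∑ j, ((u j : ℝ) * Real.exp (α * a (t j))) * P.eval (a (t j)) := by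
      simp only [hφdef, Finset.mul_sum]
      rw [Finset.sum_comm]
      refine Finset.sum_congr rfl fun j _ => ?_
      rw [Polynomial.eval_eq_sum_range' hdegP, Finset.mul_sum]
      refine Finset.sum_congr rfl fun i _ => by ring
    rw [swap]
    rw [Finset.sum_eq_single_of_mem L (Finset.mem_univ L)
      (fun j _ hj => by rw [hroot j (Finset.mem_erase.2 ⟨hj, Finset.mem_univ _⟩)]; ring)]
  -- lower bound for eval at a n
  have hfac : ∀ j ∈ s, dmin a n ≤ a n - a (t j) := by
    intro j hj
    have hjne : j ≠ L := (Finset.mem_erase.1 hj).1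
    have htj : t j < n := hjL j hjne
    have h1 : a (t j + 1) ≤ a n := ha.monotone (by omega)
    have h2 : dmin a n ≤ min 1 (a (t j + 1) - a (t j)) := dmin_le (by omega)
    have h3 := min_le_right (1:ℝ) (a (t j + 1) - a (t j))
    linarith
  have hprod : (dmin a n)^(ℓ-1) ≤ ∏ j ∈ s, (a n - a (t j)) := by
    calc (dmin a n)^(ℓ-1) = ∏ _j ∈ s, dmin a n := by rw [Finset.prod_const, hcard]
      _ ≤ ∏ j ∈ s, (a n - a (t j)) :=
          Finset.prod_le_prod (fun j _ => (dmin_pos ha n).le) hfac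
  have hevalL : a n * (dmin a n)^(ℓ-1) ≤ P.eval (a n) := by
    rw [hevalP]
    exact mul_le_mul_of_nonneg_left hprod (hapos n).le
  have hevalpos : 0 < P.eval (a n) :=
    lt_of_lt_of_le (mul_pos (hapos n) (pow_pos (dmin_pos ha n) _)) hevalL
  -- max of derivatives
  obtain ⟨i₀, hi₀mem, hi₀max⟩ := Finset.exists_max_image (Finset.Icc 1 ℓ)
    (fun i => |φ i|) ⟨1, Finset.mem_Icc.2 ⟨le_refl 1, hℓ1⟩⟩
  obtain ⟨hi₀1, hi₀ℓ⟩ := Finset.mem_Icc.1 hi₀mem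
  set R : ℝ := max 1 (a n) with hRdef
  have hR1 : (1:ℝ) ≤ R := le_max_left _ _
  -- coefficient bound
  have hcoeffb : ∀ i ∈ Finset.Icc 1 ℓ, |P.coeff i| ≤ 2^ℓ * R^ℓ := by
    intro i hi
    obtain ⟨hi1, hiℓ⟩ := Finset.mem_Icc.1 hi
    obtain ⟨m, rfl⟩ : ∃ m, i = m + 1 := ⟨i - 1, by omega⟩
    rw [hPdef, Polynomial.coeff_X_mul]
    have hb : ∀ j ∈ s, |a (t j)| ≤ R := by
      intro j hj
      have htj : t j < n := hjL j (Finset.mem_erase.1 hj).1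
      rw [abs_of_pos (hapos _)]
      exact le_trans (ha (by omega)).le (le_max_right _ _)
    have := coeff_prod_bound s (fun j => a (t j)) R hR1 hb m
    rw [hcard] at this
    calc |Q.coeff m| ≤ 2^(ℓ-1) * R^(ℓ-1) := this
      _ ≤ 2^ℓ * R^ℓ := by
          apply mul_le_mul (pow_le_pow_right₀ (by norm_num) (by omega))
            (pow_le_pow_right₀ hR1 (by omega)) (by positivity) (by positivity)
  -- absolute-value chain
  have habs : |(u L : ℝ)| * Real.exp (α * a n) * P.eval (a n)
      ≤ ((ℓ:ℝ)+1) * 2^ℓ * R^ℓ * |φ i₀| := by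
    have h1 : |(u L : ℝ)| * Real.exp (α * a n) * P.eval (a n)
        = |∑ i ∈ Finset.range (ℓ+1), P.coeff i * φ i| := by
      rw [key, abs_mul, abs_mul, abs_of_pos (Real.exp_pos _), abs_of_pos hevalpos]
    rw [h1]
    have hsplit : Finset.range (ℓ+1) = insert 0 (Finset.Icc 1 ℓ) := by
      ext x; simp [Finset.mem_Icc]; omega
    calc |∑ i ∈ Finset.range (ℓ+1), P.coeff i * φ i|
        ≤ ∑ i ∈ Finset.range (ℓ+1), |P.coeff i * φ i| := Finset.abs_sum_le_sum_abs _ _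
      _ = ∑ i ∈ Finset.Icc 1 ℓ, |P.coeff i * φ i| := by
          rw [hsplit, Finset.sum_insert (by simp), hcoeff0]
          simp
      _ ≤ ∑ _i ∈ Finset.Icc 1 ℓ, 2^ℓ * R^ℓ * |φ i₀| := by
          refine Finset.sum_le_sum fun i hi => ?_
          rw [abs_mul]
          exact mul_le_mul (hcoeffb i hi) (hi₀max i hi) (abs_nonneg _) (by positivity)
      _ = (ℓ:ℝ) * (2^ℓ * R^ℓ * |φ i₀|) := by
          rw [Finset.sum_const, Nat.card_Icc]
          simp [nsmul_eq_mul]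
      _ ≤ ((ℓ:ℝ)+1) * 2^ℓ * R^ℓ * |φ i₀| := by
          have h2 : (0:ℝ) ≤ 2^ℓ * R^ℓ * |φ i₀| := by positivity
          nlinarith
  -- combine with asymptotic bound
  have h1u : (1:ℝ) ≤ |(u L : ℝ)| := by
    have := Int.one_le_abs (hu L)
    exact_mod_cast this
  have hexp : Real.exp (A * a n) ≤ Real.exp (α * a n) :=
    Real.exp_le_exp.2 (mul_le_mul_of_nonneg_right hα.1 (hapos n).le)
  have step1 : a n * (dmin a n)^(ℓ-1) * Real.exp (A * a n)
      ≤ |(u L : ℝ)| * Real.exp (α * a n) * P.eval (a n) := by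
    have e1 : a n * (dmin a n)^(ℓ-1) * Real.exp (A * a n) ≤ P.eval (a n) * Real.exp (α * a n) :=
      mul_le_mul hevalL hexp (Real.exp_pos _).le hevalpos.le
    have e2 : P.eval (a n) * Real.exp (α * a n) ≤ |(u L : ℝ)| * Real.exp (α * a n) * P.eval (a n) := by
      rw [mul_comm (P.eval (a n))]
      exact mul_le_mul_of_nonneg_right
        (le_mul_of_one_le_left (Real.exp_pos _).le h1u) hevalpos.le
    linarith
  have hmain := hc n hnpos
  have hBpos : (0:ℝ) < ((ℓ:ℝ)+1) * 2^ℓ * R^ℓ := by positivity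
  have final : c * (n:ℝ)^η ≤ |φ i₀| := by
    have chain : c * ((n:ℝ)^η * (((ℓ:ℝ)+1) * 2^ℓ * R^ℓ)) ≤ (((ℓ:ℝ)+1) * 2^ℓ * R^ℓ) * |φ i₀| := by
      calc c * ((n:ℝ)^η * (((ℓ:ℝ)+1) * 2^ℓ * R^ℓ))
          ≤ a n * (dmin a n)^(ℓ-1) * Real.exp (A * a n) := hmain
        _ ≤ |(u L : ℝ)| * Real.exp (α * a n) * P.eval (a n) := step1
        _ ≤ ((ℓ:ℝ)+1) * 2^ℓ * R^ℓ * |φ i₀| := habs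
        _ = (((ℓ:ℝ)+1) * 2^ℓ * R^ℓ) * |φ i₀| := by ring
    have chain' : (c * (n:ℝ)^η) * (((ℓ:ℝ)+1) * 2^ℓ * R^ℓ) ≤ |φ i₀| * (((ℓ:ℝ)+1) * 2^ℓ * R^ℓ) := by
      calc (c * (n:ℝ)^η) * (((ℓ:ℝ)+1) * 2^ℓ * R^ℓ)
          = c * ((n:ℝ)^η * (((ℓ:ℝ)+1) * 2^ℓ * R^ℓ)) := by ring
        _ ≤ (((ℓ:ℝ)+1) * 2^ℓ * R^ℓ) * |φ i₀| := chain
        _ = |φ i₀| * (((ℓ:ℝ)+1) * 2^ℓ * R^ℓ) := by ring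
    exact le_of_mul_le_mul_right chain' hBpos
  refine ⟨i₀, hi₀1, hi₀ℓ, ?_⟩
  rw [hID i₀]
  exact final
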